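/- Let G be a graph of maximum degree at most 3 containing a diamond H (an induced K₄ minus an edge), and let G' be obtained from G by contracting all four vertices of H to a single vertex v (deleting loops and multiple edges). Then v has degree at most 2 in G', and α(G) ≥ α(G') + 1. -/

import Mathlib

open SimpleGraph

/-- A finset is independent in `G` if no two distinct members are adjacent. -/
def IsIndepFinset {V : Type*} (G : SimpleGraph V) (s : Finset V) : Prop :=
  ∀ v ∈ s, ∀ w ∈ s, v ≠ w → ¬ G.Adj v w

/-- The independence number: the largest cardinality of an independent finset. -/
noncomputable def indepNum {V : Type*} (G : SimpleGraph V) : ℕ :=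
  sSup {n | ∃ s : Finset V, IsIndepFinset G s ∧ s.card = n}

/-- The closed neighborhood of a vertex, as a finset. -/
def closedNbhd {V : Type*} [Fintype V] [DecidableEq V] (G : SimpleGraph V)
    [DecidableRel G.Adj] (v : V) : Finset V :=
  insert v (G.neighborFinset v)

/-- The graph obtained from `G` by contracting the vertex set `s` to a single
new vertex (represented by `none`), deleting loops and multiple edges. -/
def contractSet {V : Type*} (G : SimpleGraph V) (s : Set V) :
    SimpleGraph (Option ↥(sᶜ)) where
  Adj x y :=
    match x, y with
    | some a, some b => G.Adj a.1 b.1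
    | some a, none => ∃ w ∈ s, G.Adj w a.1
    | none, some b => ∃ w ∈ s, G.Adj w b.1
    | none, none => False
  symm := by
    constructor
    rintro (_ | a) (_ | b) h
    · exact h
    · exact h
    · exact h
    · exact G.adj_symm h
  loopless := by
    constructor
    rintro (_ | a) h
    · exact h
    · exact G.irrefl h

lemma four_nbrs {V : Type*} [Fintype V] [DecidableEq V] (G : SimpleGraph V)
    [DecidableRel G.Adj] (hdeg : ∀ v : V, G.degree v ≤ 3)
    {v x y z w : V} (hxy : x ≠ y) (hxz : x ≠ z) (hxw : x ≠ w)
    (hyz : y ≠ z) (hyw : y ≠ w) (hzw : z ≠ w)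
    (ax : G.Adj v x) (ay : G.Adj v y) (az : G.Adj v z) (aw : G.Adj v w) : False := by
  have hsub : ({x, y, z, w} : Finset V) ⊆ G.neighborFinset v := by
    intro u hu
    simp only [Finset.mem_insert, Finset.mem_singleton] at hu
    rcases hu with rfl | rfl | rfl | rfl <;> simpa
  have hcard : ({x, y, z, w} : Finset V).card = 4 := by
    rw [Finset.card_insert_of_notMem (by simp [hxy, hxz, hxw]),
      Finset.card_insert_of_notMem (by simp [hyz, hyw]),
      Finset.card_insert_of_notMem (by simp [hzw]), Finset.card_singleton]
  have h4 : 4 ≤ G.degree v := by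
    rw [← hcard]; exact Finset.card_le_card hsub
  have := hdeg v
  omega

lemma indep_bdd {W : Type*} [Fintype W] (H : SimpleGraph W) :
    BddAbove {n | ∃ t : Finset W, IsIndepFinset H t ∧ t.card = n} := by
  refine ⟨Fintype.card W, ?_⟩
  rintro n ⟨t, -, rfl⟩
  exact t.card_le_univ

lemma exists_indep {W : Type*} [Fintype W] (H : SimpleGraph W) :
    ∃ t : Finset W, IsIndepFinset H t ∧ t.card = _root_.indepNum H := by
  have hne : {n | ∃ t : Finset W, IsIndepFinset H t ∧ t.card = n}.Nonempty :=
    ⟨0, ∅, by intro v hv; simp at hv, rfl⟩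
  exact Nat.sSup_mem hne (indep_bdd H)

lemma card_le_indepNum {W : Type*} [Fintype W] (H : SimpleGraph W)
    (t : Finset W) (ht : IsIndepFinset H t) : t.card ≤ _root_.indepNum H :=
  le_csSup (indep_bdd H) ⟨t, ht, rfl⟩

theorem stmt_13 {V : Type*} [Fintype V] [DecidableEq V] (G : SimpleGraph V)
    [DecidableRel G.Adj]
    (hdeg : ∀ v : V, G.degree v ≤ 3)
    (s : Finset V) (a b c d : V)
    (hab : a ≠ b) (hac : a ≠ c) (had : a ≠ d) (hbc : b ≠ c) (hbd : b ≠ d) (hcd : c ≠ d)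
    (hs : s = {a, b, c, d})
    (eac : G.Adj a c) (ead : G.Adj a d) (ebc : G.Adj b c) (ebd : G.Adj b d)
    (ecd : G.Adj c d) (nab : ¬ G.Adj a b) :
    ((contractSet G (↑s : Set V)).neighborSet none).ncard ≤ 2 ∧
    _root_.indepNum (contractSet G (↑s : Set V)) + 1 ≤ _root_.indepNum G := by
  have hmem : ∀ w : V, w ∈ (↑s : Set V) ↔ (w = a ∨ w = b ∨ w = c ∨ w = d) := by
    intro w; simp [hs]
  have hnotmem : ∀ x : ↥((↑s : Set V)ᶜ), x.1 ≠ a ∧ x.1 ≠ b ∧ x.1 ≠ c ∧ x.1 ≠ d := by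
    intro x
    have h2 := x.2
    simp only [Set.mem_compl_iff, hmem] at h2
    push_neg at h2
    exact h2
  -- c and d have no neighbors outside s
  have hca : ∀ x : ↥((↑s : Set V)ᶜ), ¬ G.Adj c x.1 := by
    intro x hx
    obtain ⟨h1, h2, h3, h4⟩ := hnotmem x
    exact four_nbrs G hdeg hab had (Ne.symm h1) hbd (Ne.symm h2) (Ne.symm h4)
      eac.symm ebc.symm ecd hx
  have hda : ∀ x : ↥((↑s : Set V)ᶜ), ¬ G.Adj d x.1 := by
    intro x hx
    obtain ⟨h1, h2, h3, h4⟩ := hnotmem x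
    exact four_nbrs G hdeg hab hac (Ne.symm h1) hbc (Ne.symm h2) (Ne.symm h3)
      ead.symm ebd.symm ecd.symm hx
  -- a and b have at most one neighbor outside s
  have ha2 : ∀ x y : ↥((↑s : Set V)ᶜ), G.Adj a x.1 → G.Adj a y.1 → x = y := by
    intro x y hx hy
    by_contra hne
    have hxy : x.1 ≠ y.1 := fun h => hne (Subtype.ext h)
    exact four_nbrs G hdeg hcd (Ne.symm (hnotmem x).2.2.1) (Ne.symm (hnotmem y).2.2.1)
      (Ne.symm (hnotmem x).2.2.2) (Ne.symm (hnotmem y).2.2.2) hxy eac ead hx hy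
  have hb2 : ∀ x y : ↥((↑s : Set V)ᶜ), G.Adj b x.1 → G.Adj b y.1 → x = y := by
    intro x y hx hy
    by_contra hne
    have hxy : x.1 ≠ y.1 := fun h => hne (Subtype.ext h)
    exact four_nbrs G hdeg hcd (Ne.symm (hnotmem x).2.2.1) (Ne.symm (hnotmem y).2.2.1)
      (Ne.symm (hnotmem x).2.2.2) (Ne.symm (hnotmem y).2.2.2) hxy ebc ebd hx hy
  -- any outside neighbor of s is a neighbor of a or of b
  have hab2 : ∀ x : ↥((↑s : Set V)ᶜ),
      (contractSet G (↑s : Set V)).Adj none (some x) → G.Adj a x.1 ∨ G.Adj b x.1 := by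
    intro x hx
    obtain ⟨w, hw, hadj⟩ := hx
    rcases (hmem w).mp hw with rfl | rfl | rfl | rfl
    · exact Or.inl hadj
    · exact Or.inr hadj
    · exact absurd hadj (hca x)
    · exact absurd hadj (hda x)
  constructor
  · -- degree bound for the contracted vertex
    have hinj : Set.InjOn (fun o : Option ↥((↑s : Set V)ᶜ) =>
        o.elim true (fun x => decide (G.Adj a x.1)))
        ((contractSet G (↑s : Set V)).neighborSet none) := by
      rintro (_ | x) h1 (_ | y) h2 heq
      · rfl
      · exact absurd h1 ((contractSet G (↑s : Set V)).irrefl (v := none))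
      · exact absurd h2 ((contractSet G (↑s : Set V)).irrefl (v := none))
      · simp only [Option.elim, decide_eq_decide] at heq
        by_cases hax : G.Adj a x.1
        · have hay : G.Adj a y.1 := heq.mp hax
          exact congrArg some (ha2 x y hax hay)
        · have hay : ¬ G.Adj a y.1 := fun h => hax (heq.mpr h)
          have hbx : G.Adj b x.1 := (hab2 x h1).resolve_left hax
          have hby : G.Adj b y.1 := (hab2 y h2).resolve_left hay
          exact congrArg some (hb2 x y hbx hby)
    have hle := Set.ncard_le_ncard_of_injOn _
      (fun o _ => Set.mem_univ (o.elim true (fun x => decide (G.Adj a x.1)))) hinj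
      (Set.finite_univ (α := Bool))
    simpa [Set.ncard_univ] using hle
  · -- independence number
    have : Fintype ↥((↑s : Set V)ᶜ) := Fintype.ofFinite _
    obtain ⟨T, hT, hTcard⟩ := exists_indep (contractSet G (↑s : Set V))
    set f : Option ↥((↑s : Set V)ᶜ) → V := fun o => o.elim a Subtype.val with hf
    have hsome : ∀ x y : ↥((↑s : Set V)ᶜ), some x ∈ T → some y ∈ T →
        x.1 ≠ y.1 → ¬ G.Adj x.1 y.1 := by
      intro x y hx hy hne hadj
      exact hT (some x) hx (some y) hy (fun h => hne (congrArg (Option.elim · a Subtype.val) h)) hadj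
    by_cases hnone : none ∈ T
    · -- use a and b
      set img := (T.erase none).image f with himgdef
      have himg : ∀ v ∈ img, ∃ x : ↥((↑s : Set V)ᶜ), some x ∈ T ∧ v = x.1 := by
        intro v hv
        obtain ⟨o, ho, rfl⟩ := Finset.mem_image.mp hv
        obtain ⟨hone, hoT⟩ := Finset.mem_erase.mp ho
        match o with
        | some x => exact ⟨x, hoT, rfl⟩
        | none => exact absurd rfl hone
      have hfab : ∀ x : ↥((↑s : Set V)ᶜ), some x ∈ T →
          ¬ G.Adj a x.1 ∧ ¬ G.Adj b x.1 := by
        intro x hx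
        have hnadj : ¬ (contractSet G (↑s : Set V)).Adj none (some x) :=
          hT none hnone (some x) hx (by simp)
        constructor
        · exact fun h => hnadj ⟨a, (hmem a).mpr (Or.inl rfl), h⟩
        · exact fun h => hnadj ⟨b, (hmem b).mpr (Or.inr (Or.inl rfl)), h⟩
      set U : Finset V := insert a (insert b img) with hU
      have hUindep : IsIndepFinset G U := by
        intro u hu v hv hne hadj
        simp only [hU, Finset.mem_insert] at hu hv
        rcases hu with rfl | rfl | hu <;> rcases hv with rfl | rfl | hv
        · exact hne rfl
        · exact nab hadj
        · obtain ⟨x, hx, rfl⟩ := himg _ hv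
          exact (hfab x hx).1 hadj
        · exact nab hadj.symm
        · exact hne rfl
        · obtain ⟨x, hx, rfl⟩ := himg _ hv
          exact (hfab x hx).2 hadj
        · obtain ⟨x, hx, rfl⟩ := himg _ hu
          exact (hfab x hx).1 hadj.symm
        · obtain ⟨x, hx, rfl⟩ := himg _ hu
          exact (hfab x hx).2 hadj.symm
        · obtain ⟨x, hx, rfl⟩ := himg _ hu
          obtain ⟨y, hy, rfl⟩ := himg _ hv
          exact hsome x y hx hy hne hadj
      have hximg : ∀ x : V, x ∈ img → x ≠ a ∧ x ≠ b := by
        intro x hx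
        obtain ⟨y, _, rfl⟩ := himg _ hx
        exact ⟨(hnotmem y).1, (hnotmem y).2.1⟩
      have hbimg : b ∉ img := fun h => (hximg b h).2 rfl
      have haimg : a ∉ insert b img := by
        simp only [Finset.mem_insert]
        rintro (rfl | h)
        · exact hab rfl
        · exact (hximg a h).1 rfl
      have hinjf : Set.InjOn f ↑(T.erase none) := by
        intro o1 h1 o2 h2 heq
        simp only [Finset.coe_erase, Set.mem_diff, Set.mem_singleton_iff] at h1 h2
        match o1, o2 with
        | some x, some y =>
          exact congrArg some (Subtype.ext heq)
        | none, _ => exact absurd rfl h1.2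
        | some x, none => exact absurd rfl h2.2
      have hcardimg : img.card = T.card - 1 := by
        rw [himgdef, Finset.card_image_of_injOn hinjf, Finset.card_erase_of_mem hnone]
      have hTpos : 1 ≤ T.card := Finset.card_pos.mpr ⟨none, hnone⟩
      have hUcard : U.card = T.card + 1 := by
        rw [hU, Finset.card_insert_of_notMem haimg, Finset.card_insert_of_notMem hbimg,
          hcardimg]
        omega
      have := card_le_indepNum G U hUindep
      omega
    · -- use c
      set img := T.image f with himgdef
      have himg : ∀ v ∈ img, ∃ x : ↥((↑s : Set V)ᶜ), some x ∈ T ∧ v = x.1 := by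
        intro v hv
        obtain ⟨o, ho, rfl⟩ := Finset.mem_image.mp hv
        match o with
        | some x => exact ⟨x, ho, rfl⟩
        | none => exact absurd ho hnone
      set U : Finset V := insert c img with hU
      have hUindep : IsIndepFinset G U := by
        intro u hu v hv hne hadj
        simp only [hU, Finset.mem_insert] at hu hv
        rcases hu with rfl | hu <;> rcases hv with rfl | hv
        · exact hne rfl
        · obtain ⟨x, hx, rfl⟩ := himg _ hv
          exact hca x hadj
        · obtain ⟨x, hx, rfl⟩ := himg _ hu
          exact hca x hadj.symm
        · obtain ⟨x, hx, rfl⟩ := himg _ hu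
          obtain ⟨y, hy, rfl⟩ := himg _ hv
          exact hsome x y hx hy hne hadj
      have hcimg : c ∉ img := by
        intro h
        obtain ⟨y, _, hy⟩ := himg _ h
        exact (hnotmem y).2.2.1 hy.symm
      have hinjf : Set.InjOn f ↑T := by
        intro o1 h1 o2 h2 heq
        match o1, o2 with
        | some x, some y => exact congrArg some (Subtype.ext heq)
        | none, _ => exact absurd h1 hnone
        | some x, none => exact absurd h2 hnone
      have hcardimg : img.card = T.card := by
        rw [himgdef, Finset.card_image_of_injOn hinjf]
      have hUcard : U.card = T.card + 1 := by
        rw [hU, Finset.card_insert_of_notMem hcimg, hcardimg]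
      have := card_le_indepNum G U hUindep
      omega
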